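/- (Break conditions, Theorem 5.3.) Fix Y ∈ ℤ, 1 ≤ r ≤ D, 1 ≤ d < D, and a category pattern c = (c_1,…,c_d) ∈ {lt, eq, gt}^d with n1, n2, n3 the numbers of lt, eq, gt entries respectively, such that the event E = {cat(Z_1) = c_1, …, cat(Z_d) = c_d} ∩ {os_r(Z) = Y} has positive probability. Suppose one of the following holds: (1) n2 ≥ 1 and n1 = r − 1; (2) n2 ≥ 1 and n3 = D − r; (3) n2 = max(r − n1, D − r − n3 + 1). Then, conditional on E, the remaining variables Z_{d+1}, …, Z_D are i.i.d. with pmf g, where in case (1) g(z) = f(z)·1{z ≥ Y}/(1 − F(Y−1)); in case (2) g(z) = f(z)·1{z ≤ Y}/F(Y); and in case (3) g = f. Equivalently, for all (z_{d+1},…,z_D) ∈ ℤ^{D−d}: P(Z_{d+1} = z_{d+1}, …, Z_D = z_D ∧ E) = P(E) · ∏_{t=d+1}^{D} g(z_t). -/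

import Mathlib

open MeasureTheory

/-- The measure on ℤ with mass function `f`. -/
noncomputable def parentMeasure (f : ℤ → ℝ) : Measure ℤ :=
  Measure.count.withDensity fun z => ENNReal.ofReal (f z)

/-- `P f D S` is the probability of the event `S` under the `D`-fold product of the
measure on ℤ with pmf `f`, i.e. the law of `D` i.i.d. draws `Z = (Z_1, …, Z_D)` from `f`. -/
noncomputable def P (f : ℤ → ℝ) (D : ℕ) (S : Set (Fin D → ℤ)) : ℝ :=
  (Measure.pi (fun _ : Fin D => parentMeasure f) S).toReal

/-- The CDF of `f`: `F(y) = ∑_{t ≤ y} f(t)`. -/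
noncomputable def Fcdf (f : ℤ → ℝ) (y : ℤ) : ℝ := ∑' z : {t : ℤ // t ≤ y}, f z.1

/-- The number of entries of `z` that are `≤ y`. -/
def countLe {n : ℕ} (z : Fin n → ℤ) (y : ℤ) : ℕ :=
  (Finset.univ.filter fun i => z i ≤ y).card

/-- `osEq r z Y` says that the `r`-th smallest entry of `z` (counting multiplicity)
equals `Y`: the `r`-th order statistic is `≤ Y` but not `≤ Y - 1`. -/
def osEq {n : ℕ} (r : ℕ) (z : Fin n → ℤ) (Y : ℤ) : Prop :=
  r ≤ countLe z Y ∧ countLe z (Y - 1) < r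

/-- The order-statistic CDF `F^{(a,m)}(y) = ∑_{t=a}^{m} (m choose t) F(y)^t (1−F(y))^{m−t}`. -/
noncomputable def osCDF (f : ℤ → ℝ) (a m : ℕ) (y : ℤ) : ℝ :=
  ∑ t ∈ Finset.Icc a m, (m.choose t : ℝ) * Fcdf f y ^ t * (1 - Fcdf f y) ^ (m - t)

/-- The three categories of an integer relative to a fixed value `Y`. -/
inductive Cat3 where
  | lt : Cat3
  | eq : Cat3
  | gt : Cat3
deriving DecidableEq

/-- The category of `z` relative to `Y`. -/
def catOf (Y z : ℤ) : Cat3 := if z < Y then Cat3.lt else if z = Y then Cat3.eq else Cat3.gt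


section AuxOSBC
open Finset

def backEmb (D d : ℕ) (hdD : d ≤ D) : Fin (D - d) ↪ Fin D :=
  ⟨fun t => ⟨d + t.1, by omega⟩, fun a b h => by
    have : d + a.1 = d + b.1 := congrArg Fin.val h
    exact Fin.ext (by omega)⟩

lemma backEmb_val (D d : ℕ) (hdD : d ≤ D) (t : Fin (D - d)) :
    (backEmb D d hdD t).1 = d + t.1 := rfl

lemma filter_front_eq {D d : ℕ} (hdD : d ≤ D) (p : Fin D → Prop) [DecidablePred p] :
    (Finset.univ.filter fun i : Fin D => p i ∧ i.1 < d)
      = Finset.map (Fin.castLEEmb hdD) (Finset.univ.filter fun t => p (Fin.castLE hdD t)) := by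
  ext i
  simp only [mem_filter, mem_map, mem_univ, true_and, Fin.castLEEmb_apply]
  constructor
  · rintro ⟨hp, hlt⟩
    exact ⟨⟨i.1, hlt⟩, by convert hp using 2 <;> exact Fin.ext rfl, Fin.ext rfl⟩
  · rintro ⟨t, hp, rfl⟩
    exact ⟨hp, t.isLt⟩

lemma filter_back_eq {D d : ℕ} (hdD : d ≤ D) (p : Fin D → Prop) [DecidablePred p] :
    (Finset.univ.filter fun i : Fin D => p i ∧ ¬ i.1 < d)
      = Finset.map (backEmb D d hdD) (Finset.univ.filter fun t => p (backEmb D d hdD t)) := by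
  ext i
  simp only [mem_filter, mem_map, mem_univ, true_and]
  constructor
  · rintro ⟨hp, hlt⟩
    refine ⟨⟨i.1 - d, by omega⟩, ?_, ?_⟩
    · convert hp using 2; exact Fin.ext (by simp [backEmb_val]; omega)
    · exact Fin.ext (by simp [backEmb_val]; omega)
  · rintro ⟨t, hp, rfl⟩
    exact ⟨hp, by simp [backEmb_val]⟩

lemma countLe_split {D d : ℕ} (hdD : d ≤ D) (ω : Fin D → ℤ) (y : ℤ) :
    countLe ω y = (Finset.univ.filter fun t : Fin d => ω (Fin.castLE hdD t) ≤ y).card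
      + (Finset.univ.filter fun t : Fin (D - d) => ω (backEmb D d hdD t) ≤ y).card := by
  rw [countLe, ← Finset.card_filter_add_card_filter_not
    (p := fun i : Fin D => i.1 < d), Finset.filter_filter, Finset.filter_filter,
    filter_front_eq hdD (fun i => ω i ≤ y), filter_back_eq hdD (fun i => ω i ≤ y),
    Finset.card_map, Finset.card_map]

lemma cat_le_Y {Y z : ℤ} {k : Cat3} (h : catOf Y z = k) : z ≤ Y ↔ k ≠ Cat3.gt := by
  unfold catOf at h
  split_ifs at h with h1 h2 <;> subst h <;> simp <;> omega

lemma cat_le_Ym1 {Y z : ℤ} {k : Cat3} (h : catOf Y z = k) : z ≤ Y - 1 ↔ k = Cat3.lt := by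
  unfold catOf at h
  split_ifs at h with h1 h2 <;> subst h <;> simp <;> omega

lemma cat_card_ne_gt {d : ℕ} (c : Fin d → Cat3) :
    (Finset.univ.filter fun t => c t ≠ Cat3.gt).card
      = (Finset.univ.filter fun t => c t = Cat3.lt).card
        + (Finset.univ.filter fun t => c t = Cat3.eq).card := by
  rw [← Finset.card_filter_add_card_filter_not
    (s := Finset.univ.filter fun t => c t ≠ Cat3.gt) (p := fun t => c t = Cat3.lt),
    Finset.filter_filter, Finset.filter_filter]
  congr 1
  · apply Finset.card_nbij id <;> intro t <;> simp <;> cases c t <;> simp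
  · apply Finset.card_nbij id <;> intro t <;> simp <;> cases c t <;> simp

lemma cat_card_gt {d : ℕ} (c : Fin d → Cat3) :
    (Finset.univ.filter fun t => c t ≠ Cat3.gt).card
      + (Finset.univ.filter fun t => c t = Cat3.gt).card = d := by
  rw [add_comm, Finset.card_filter_add_card_filter_not
    (p := fun t => c t = Cat3.gt), Finset.card_univ, Fintype.card_fin]

lemma back_card_le {m : ℕ} (q : Fin m → Prop) [DecidablePred q] :
    (Finset.univ.filter q).card ≤ m := by
  simpa using Finset.card_filter_le Finset.univ q

lemma back_card_eq_iff {m : ℕ} (q : Fin m → Prop) [DecidablePred q] :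
    (Finset.univ.filter q).card = m ↔ ∀ t, q t := by
  constructor
  · intro h t
    have h2 : (Finset.univ : Finset (Fin m)).card ≤ (Finset.univ.filter q).card := by
      simp [h]
    have := Finset.eq_of_subset_of_card_le (Finset.filter_subset q Finset.univ) h2
    have ht : t ∈ Finset.univ.filter q := by rw [this]; exact Finset.mem_univ t
    exact (Finset.mem_filter.1 ht).2
  · intro h
    rw [Finset.filter_true_of_mem fun t _ => h t]
    simp

lemma back_card_zero_iff {m : ℕ} (q : Fin m → Prop) [DecidablePred q] :
    (Finset.univ.filter q).card = 0 ↔ ∀ t, ¬ q t := by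
  rw [Finset.card_eq_zero, Finset.filter_eq_empty_iff]
  simp

lemma countLe_Y_pattern {Y : ℤ} {D d : ℕ} (hdD : d ≤ D) (ω : Fin D → ℤ) (c : Fin d → Cat3)
    (hc : ∀ t : Fin d, catOf Y (ω (Fin.castLE hdD t)) = c t) :
    countLe ω Y = (Finset.univ.filter fun t => c t = Cat3.lt).card
      + (Finset.univ.filter fun t => c t = Cat3.eq).card
      + (Finset.univ.filter fun t : Fin (D - d) => ω (backEmb D d hdD t) ≤ Y).card := by
  rw [countLe_split hdD ω Y, ← cat_card_ne_gt]
  congr 2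
  exact Finset.filter_congr fun t _ => by
    simp only [cat_le_Y (hc t)]

lemma countLe_Ym1_pattern {Y : ℤ} {D d : ℕ} (hdD : d ≤ D) (ω : Fin D → ℤ) (c : Fin d → Cat3)
    (hc : ∀ t : Fin d, catOf Y (ω (Fin.castLE hdD t)) = c t) :
    countLe ω (Y - 1) = (Finset.univ.filter fun t => c t = Cat3.lt).card
      + (Finset.univ.filter fun t : Fin (D - d) => ω (backEmb D d hdD t) ≤ Y - 1).card := by
  rw [countLe_split hdD ω (Y - 1)]
  congr 2
  exact Finset.filter_congr fun t _ => by
    simp only [cat_le_Ym1 (hc t)]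

section IffLemmas

variable {Y : ℤ} {D d r : ℕ} (hdD : d ≤ D) (ω : Fin D → ℤ) (c : Fin d → Cat3)

lemma osEq_iff_case1 (hr1 : 1 ≤ r)
    (hc : ∀ t : Fin d, catOf Y (ω (Fin.castLE hdD t)) = c t)
    (hn2 : 1 ≤ (Finset.univ.filter fun t => c t = Cat3.eq).card)
    (hn1 : (Finset.univ.filter fun t => c t = Cat3.lt).card = r - 1) :
    osEq r ω Y ↔ ∀ t : Fin (D - d), Y ≤ ω (backEmb D d hdD t) := by
  have hY := countLe_Y_pattern hdD ω c hc
  have hY1 := countLe_Ym1_pattern hdD ω c hc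
  rw [osEq, hY, hY1]
  constructor
  · rintro ⟨-, hB⟩ t
    have h0 : (Finset.univ.filter fun t : Fin (D - d) =>
        ω (backEmb D d hdD t) ≤ Y - 1).card = 0 := by omega
    have := (back_card_zero_iff _).1 h0 t
    omega
  · intro h
    have h0 : (Finset.univ.filter fun t : Fin (D - d) =>
        ω (backEmb D d hdD t) ≤ Y - 1).card = 0 :=
      (back_card_zero_iff _).2 fun t => by have := h t; omega
    omega

lemma osEq_iff_case2 (hr1 : 1 ≤ r) (hrD : r ≤ D)
    (hc : ∀ t : Fin d, catOf Y (ω (Fin.castLE hdD t)) = c t)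
    (hn2 : 1 ≤ (Finset.univ.filter fun t => c t = Cat3.eq).card)
    (hn3 : (Finset.univ.filter fun t => c t = Cat3.gt).card = D - r) :
    osEq r ω Y ↔ ∀ t : Fin (D - d), ω (backEmb D d hdD t) ≤ Y := by
  have hY := countLe_Y_pattern hdD ω c hc
  have hY1 := countLe_Ym1_pattern hdD ω c hc
  have hsum : (Finset.univ.filter fun t => c t = Cat3.lt).card
      + (Finset.univ.filter fun t => c t = Cat3.eq).card
      + (Finset.univ.filter fun t => c t = Cat3.gt).card = d := by
    rw [← cat_card_ne_gt]; exact cat_card_gt c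
  have hBY := back_card_le (fun t : Fin (D - d) => ω (backEmb D d hdD t) ≤ Y)
  have hB1 := back_card_le (fun t : Fin (D - d) => ω (backEmb D d hdD t) ≤ Y - 1)
  rw [osEq, hY, hY1]
  constructor
  · rintro ⟨hA, -⟩
    exact (back_card_eq_iff _).1 (by omega)
  · intro h
    have := (back_card_eq_iff (fun t : Fin (D - d) => ω (backEmb D d hdD t) ≤ Y)).2 h
    omega

lemma osEq_case3 (hr1 : 1 ≤ r) (hrD : r ≤ D)
    (hc : ∀ t : Fin d, catOf Y (ω (Fin.castLE hdD t)) = c t)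
    (hn2a : r - (Finset.univ.filter fun t => c t = Cat3.lt).card
      ≤ (Finset.univ.filter fun t => c t = Cat3.eq).card)
    (hn2b : D - r - (Finset.univ.filter fun t => c t = Cat3.gt).card + 1
      ≤ (Finset.univ.filter fun t => c t = Cat3.eq).card) :
    osEq r ω Y := by
  have hY := countLe_Y_pattern hdD ω c hc
  have hY1 := countLe_Ym1_pattern hdD ω c hc
  have hsum : (Finset.univ.filter fun t => c t = Cat3.lt).card
      + (Finset.univ.filter fun t => c t = Cat3.eq).card
      + (Finset.univ.filter fun t => c t = Cat3.gt).card = d := by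
    rw [← cat_card_ne_gt]; exact cat_card_gt c
  have hB1 := back_card_le (fun t : Fin (D - d) => ω (backEmb D d hdD t) ≤ Y - 1)
  have hd : d ≤ D := by omega
  constructor <;> omega

end IffLemmas

lemma pm_apply (f : ℤ → ℝ) (A : Set ℤ) :
    parentMeasure f A = ∑' z : A, ENNReal.ofReal (f z.1) := by
  rw [parentMeasure, withDensity_apply _ .of_discrete,
    ← lintegral_indicator MeasurableSet.of_discrete (fun z => ENNReal.ofReal (f z)),
    lintegral_count, ← _root_.tsum_subtype]

lemma pm_tsum (f : ℤ → ℝ) (hf0 : ∀ z, 0 ≤ f z) (hsum : Summable f) (A : Set ℤ) :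
    parentMeasure f A = ENNReal.ofReal (∑' z : A, f z.1) := by
  rw [pm_apply, ENNReal.ofReal_tsum_of_nonneg (fun z : A => hf0 z.1) (hsum.subtype A)]

lemma pm_univ (f : ℤ → ℝ) (hf0 : ∀ z, 0 ≤ f z) (hf1 : HasSum f 1) :
    parentMeasure f Set.univ = 1 := by
  rw [pm_tsum f hf0 hf1.summable, tsum_univ]
  simp [hf1.tsum_eq]

lemma pm_singleton (f : ℤ → ℝ) (w : ℤ) :
    parentMeasure f ({w} : Set ℤ) = ENNReal.ofReal (f w) := by
  rw [pm_apply]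
  exact tsum_singleton w (fun z => ENNReal.ofReal (f z))

lemma fcdf_split (f : ℤ → ℝ) (hf1 : HasSum f 1) (Y : ℤ) :
    Fcdf f (Y - 1) + ∑' z : ↥{z : ℤ | Y ≤ z}, f z.1 = 1 := by
  have hc : {t : ℤ | t ≤ Y - 1}ᶜ = {z : ℤ | Y ≤ z} := by
    ext z; simp [Set.mem_compl_iff]
  have h := Summable.tsum_add_tsum_compl (f := f) (s := {t : ℤ | t ≤ Y - 1})
    (hf1.summable.subtype _) (hf1.summable.subtype _)
  rw [hc, hf1.tsum_eq] at h
  exact h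

lemma toReal_pm_ge (f : ℤ → ℝ) (hf0 : ∀ z, 0 ≤ f z) (hf1 : HasSum f 1) (Y : ℤ) :
    (parentMeasure f {z : ℤ | Y ≤ z}).toReal = 1 - Fcdf f (Y - 1) := by
  have h0 : (0:ℝ) ≤ ∑' z : ↥{z : ℤ | Y ≤ z}, f z.1 := tsum_nonneg fun z => hf0 z.1
  rw [pm_tsum f hf0 hf1.summable, ENNReal.toReal_ofReal h0]
  have := fcdf_split f hf1 Y
  linarith

lemma toReal_pm_le (f : ℤ → ℝ) (hf0 : ∀ z, 0 ≤ f z) (hf1 : HasSum f 1) (Y : ℤ) :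
    (parentMeasure f {z : ℤ | z ≤ Y}).toReal = Fcdf f Y := by
  have h0 : (0:ℝ) ≤ ∑' z : ↥{z : ℤ | z ≤ Y}, f z.1 := tsum_nonneg fun z => hf0 z.1
  rw [pm_tsum f hf0 hf1.summable, ENNReal.toReal_ofReal h0]
  rfl

lemma filter_not_lt_eq {D d : ℕ} (hdD : d ≤ D) :
    (Finset.univ.filter fun i : Fin D => ¬ i.1 < d)
      = Finset.map (backEmb D d hdD) Finset.univ := by
  ext i
  simp only [mem_filter, mem_map, mem_univ, true_and, not_lt]
  constructor
  · intro h
    exact ⟨⟨i.1 - d, by omega⟩, Fin.ext (by simp [backEmb_val]; omega)⟩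
  · rintro ⟨t, rfl⟩
    simp [backEmb_val]

lemma master (f : ℤ → ℝ) (hf0 : ∀ z, 0 ≤ f z) (hf1 : HasSum f 1)
    (Y : ℤ) (D r d : ℕ) (hdD : d < D) (c : Fin d → Cat3) (A : Set ℤ)
    (hiff : ∀ ω : Fin D → ℤ, (∀ t : Fin d, catOf Y (ω (Fin.castLE hdD.le t)) = c t) →
      (osEq r ω Y ↔ ∀ t : Fin (D - d), ω (backEmb D d hdD.le t) ∈ A))
    (w : Fin (D - d) → ℤ) :
    ∃ PF : ℝ,
      P f D {ω | (∀ t : Fin d, catOf Y (ω (Fin.castLE hdD.le t)) = c t) ∧ osEq r ω Y}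
        = PF * ((parentMeasure f A).toReal) ^ (D - d) ∧
      P f D {ω | (∀ t : Fin (D - d), ω ⟨d + t.1, by have := t.isLt; omega⟩ = w t) ∧
          (∀ t : Fin d, catOf Y (ω (Fin.castLE hdD.le t)) = c t) ∧ osEq r ω Y}
        = PF * ∏ t : Fin (D - d), (parentMeasure f ({w t} ∩ A)).toReal := by
  haveI : IsProbabilityMeasure (parentMeasure f) := ⟨pm_univ f hf0 hf1⟩
  set S : Fin D → Set ℤ := fun i =>
    if h : i.1 < d then {z | catOf Y z = c ⟨i.1, h⟩} else A with hS
  set S' : Fin D → Set ℤ := fun i =>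
    if h : i.1 < d then {z | catOf Y z = c ⟨i.1, h⟩}
    else ({w ⟨i.1 - d, by omega⟩} ∩ A) with hS'
  have hback_lt : ∀ t : Fin (D - d), ¬ (backEmb D d hdD.le t).1 < d := by
    intro t; simp [backEmb_val]
  have hback_eq : ∀ (ω : Fin D → ℤ) (t : Fin (D - d)),
      ω (backEmb D d hdD.le t) = ω ⟨d + t.1, by have := t.isLt; omega⟩ := fun ω t => rfl
  -- set equality for E
  have hEset : {ω : Fin D → ℤ | (∀ t : Fin d, catOf Y (ω (Fin.castLE hdD.le t)) = c t) ∧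
      osEq r ω Y} = Set.univ.pi S := by
    ext ω
    simp only [Set.mem_setOf_eq, Set.mem_pi, Set.mem_univ, true_implies]
    constructor
    · rintro ⟨hp, ho⟩ i
      by_cases h : i.1 < d
      · rw [hS]; dsimp only; rw [dif_pos h]
        exact hp ⟨i.1, h⟩
      · rw [hS]; dsimp only; rw [dif_neg h]
        have h2 := (hiff ω hp).1 ho ⟨i.1 - d, by omega⟩
        have h3 : backEmb D d hdD.le ⟨i.1 - d, by omega⟩ = i :=
          Fin.ext (by simp [backEmb_val]; omega)
        rwa [h3] at h2
    · intro h
      have hp : ∀ t : Fin d, catOf Y (ω (Fin.castLE hdD.le t)) = c t := by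
        intro t
        have := h (Fin.castLE hdD.le t)
        rw [hS] at this; dsimp only at this
        rwa [dif_pos (show ((Fin.castLE hdD.le t) : Fin D).1 < d from t.isLt)] at this
      refine ⟨hp, (hiff ω hp).2 fun t => ?_⟩
      have := h (backEmb D d hdD.le t)
      rw [hS] at this; dsimp only at this
      rwa [dif_neg (hback_lt t)] at this
  -- set equality for the LHS event
  have hLset : {ω : Fin D → ℤ | (∀ t : Fin (D - d),
      ω ⟨d + t.1, by have := t.isLt; omega⟩ = w t) ∧
      (∀ t : Fin d, catOf Y (ω (Fin.castLE hdD.le t)) = c t) ∧ osEq r ω Y}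
      = Set.univ.pi S' := by
    ext ω
    simp only [Set.mem_setOf_eq, Set.mem_pi, Set.mem_univ, true_implies]
    constructor
    · rintro ⟨hw, hp, ho⟩ i
      by_cases h : i.1 < d
      · rw [hS']; dsimp only; rw [dif_pos h]
        exact hp ⟨i.1, h⟩
      · rw [hS']; dsimp only; rw [dif_neg h]
        have h3 : backEmb D d hdD.le ⟨i.1 - d, by omega⟩ = i :=
          Fin.ext (by simp [backEmb_val]; omega)
        constructor
        · refine Set.mem_singleton_iff.2 ?_
          have h2 := hw ⟨i.1 - d, by omega⟩
          convert h2 using 2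
          exact Fin.ext (by simp; omega)
        · have h2 := (hiff ω hp).1 ho ⟨i.1 - d, by omega⟩
          rwa [h3] at h2
    · intro h
      have hp : ∀ t : Fin d, catOf Y (ω (Fin.castLE hdD.le t)) = c t := by
        intro t
        have := h (Fin.castLE hdD.le t)
        rw [hS'] at this; dsimp only at this
        rwa [dif_pos (show ((Fin.castLE hdD.le t) : Fin D).1 < d from t.isLt)] at this
      have hback : ∀ t : Fin (D - d),
          ω (backEmb D d hdD.le t) ∈ ({w t} : Set ℤ) ∩ A := by
        intro t
        have := h (backEmb D d hdD.le t)
        rw [hS'] at this; dsimp only at this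
        rw [dif_neg (hback_lt t)] at this
        have h4 : (⟨(backEmb D d hdD.le t).1 - d, by omega⟩ : Fin (D - d)) = t :=
          Fin.ext (by simp [backEmb_val])
        rwa [h4] at this
      refine ⟨fun t => ?_, hp, (hiff ω hp).2 fun t => (hback t).2⟩
      rw [← hback_eq ω t]
      exact (hback t).1
  refine ⟨∏ i ∈ Finset.univ.filter (fun i : Fin D => i.1 < d),
    (parentMeasure f (S i)).toReal, ?_, ?_⟩
  · rw [P, hEset, Measure.pi_pi, ENNReal.toReal_prod,
      ← Finset.prod_filter_mul_prod_filter_not Finset.univ (fun i : Fin D => i.1 < d)]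
    congr 1
    rw [filter_not_lt_eq hdD.le, Finset.prod_map]
    have : ∀ t : Fin (D - d),
        (parentMeasure f (S (backEmb D d hdD.le t))).toReal
          = (parentMeasure f A).toReal := by
      intro t; rw [hS]; dsimp only; rw [dif_neg (hback_lt t)]
    rw [Finset.prod_congr rfl fun t _ => this t, Finset.prod_const, Finset.card_univ,
      Fintype.card_fin]
  · rw [P, hLset, Measure.pi_pi, ENNReal.toReal_prod,
      ← Finset.prod_filter_mul_prod_filter_not Finset.univ (fun i : Fin D => i.1 < d)]
    congr 1
    · apply Finset.prod_congr rfl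
      intro i hi
      have h := (Finset.mem_filter.1 hi).2
      rw [hS, hS']; dsimp only; rw [dif_pos h, dif_pos h]
    · rw [filter_not_lt_eq hdD.le, Finset.prod_map]
      apply Finset.prod_congr rfl
      intro t _
      rw [hS']; dsimp only; rw [dif_neg (hback_lt t)]
      have h4 : (⟨(backEmb D d hdD.le t).1 - d, by omega⟩ : Fin (D - d)) = t :=
        Fin.ext (by simp [backEmb_val])
      rw [h4]

end AuxOSBC

/-- **Theorem 5.3** (break conditions): suppose the event
`E = {cat(Z_1) = c_1, …, cat(Z_d) = c_d} ∩ {os_r(Z) = Y}` has positive probability, and let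
`n1, n2, n3` be the numbers of `lt`, `eq`, `gt` entries of the pattern `c`.  If
(1) `n2 ≥ 1` and `n1 = r − 1`, or (2) `n2 ≥ 1` and `n3 = D − r`, or
(3) `n2 = max(r − n1, D − r − n3 + 1)`, then conditional on `E`, the remaining draws
`Z_{d+1}, …, Z_D` are i.i.d. with pmf `g`, where `g` is respectively `f` truncated to
`[Y, ∞)`, `f` truncated to `(−∞, Y]`, or `f` itself; equivalently, the displayed
product formulas for the joint probabilities hold. -/
theorem order_statistic_break_conditions
    (f : ℤ → ℝ) (hf0 : ∀ z, 0 ≤ f z) (hf1 : HasSum f 1)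
    (Y : ℤ) (D r d : ℕ) (hr1 : 1 ≤ r) (hrD : r ≤ D) (hd1 : 1 ≤ d) (hdD : d < D)
    (c : Fin d → Cat3)
    (hE : 0 < P f D {ω | (∀ t : Fin d, catOf Y (ω (Fin.castLE hdD.le t)) = c t) ∧
        osEq r ω Y}) :
    ((1 ≤ (Finset.univ.filter fun t => c t = Cat3.eq).card ∧
        (Finset.univ.filter fun t => c t = Cat3.lt).card = r - 1) →
      ∀ w : Fin (D - d) → ℤ,
        P f D {ω | (∀ t : Fin (D - d), ω ⟨d + t.1, by have := t.isLt; omega⟩ = w t) ∧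
            (∀ t : Fin d, catOf Y (ω (Fin.castLE hdD.le t)) = c t) ∧ osEq r ω Y}
          = P f D {ω | (∀ t : Fin d, catOf Y (ω (Fin.castLE hdD.le t)) = c t) ∧
                osEq r ω Y} *
              ∏ t : Fin (D - d),
                (if Y ≤ w t then f (w t) / (1 - Fcdf f (Y - 1)) else 0)) ∧
    ((1 ≤ (Finset.univ.filter fun t => c t = Cat3.eq).card ∧
        (Finset.univ.filter fun t => c t = Cat3.gt).card = D - r) →
      ∀ w : Fin (D - d) → ℤ,
        P f D {ω | (∀ t : Fin (D - d), ω ⟨d + t.1, by have := t.isLt; omega⟩ = w t) ∧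
            (∀ t : Fin d, catOf Y (ω (Fin.castLE hdD.le t)) = c t) ∧ osEq r ω Y}
          = P f D {ω | (∀ t : Fin d, catOf Y (ω (Fin.castLE hdD.le t)) = c t) ∧
                osEq r ω Y} *
              ∏ t : Fin (D - d),
                (if w t ≤ Y then f (w t) / Fcdf f Y else 0)) ∧
    (((Finset.univ.filter fun t => c t = Cat3.eq).card
        = max (r - (Finset.univ.filter fun t => c t = Cat3.lt).card)
              (D - r - (Finset.univ.filter fun t => c t = Cat3.gt).card + 1)) →
      ∀ w : Fin (D - d) → ℤ,
        P f D {ω | (∀ t : Fin (D - d), ω ⟨d + t.1, by have := t.isLt; omega⟩ = w t) ∧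
            (∀ t : Fin d, catOf Y (ω (Fin.castLE hdD.le t)) = c t) ∧ osEq r ω Y}
          = P f D {ω | (∀ t : Fin d, catOf Y (ω (Fin.castLE hdD.le t)) = c t) ∧
                osEq r ω Y} *
              ∏ t : Fin (D - d), f (w t)) := by
  have hDd : D - d ≠ 0 := by omega
  refine ⟨?_, ?_, ?_⟩
  · rintro ⟨hn2, hn1⟩ w
    obtain ⟨PF, hEeq, hLeq⟩ := master f hf0 hf1 Y D r d hdD c {z : ℤ | Y ≤ z}
      (fun ω hp => osEq_iff_case1 hdD.le ω c hr1 hp hn2 hn1) w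
    have hne : (1 : ℝ) - Fcdf f (Y - 1) ≠ 0 := by
      intro h
      rw [hEeq, toReal_pm_ge f hf0 hf1 Y, h, zero_pow hDd, mul_zero] at hE
      exact lt_irrefl 0 hE
    have hfac : ∀ t : Fin (D - d), (parentMeasure f ({w t} ∩ {z : ℤ | Y ≤ z})).toReal
        = (1 - Fcdf f (Y - 1)) * (if Y ≤ w t then f (w t) / (1 - Fcdf f (Y - 1)) else 0) := by
      intro t
      by_cases hwt : Y ≤ w t
      · rw [if_pos hwt, show ({w t} : Set ℤ) ∩ {z : ℤ | Y ≤ z} = {w t} by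
          ext z
          simp only [Set.mem_inter_iff, Set.mem_singleton_iff, Set.mem_setOf_eq,
            and_iff_left_iff_imp]
          rintro rfl; exact hwt,
          pm_singleton, ENNReal.toReal_ofReal (hf0 _)]
        field_simp
      · rw [if_neg hwt, show ({w t} : Set ℤ) ∩ {z : ℤ | Y ≤ z} = ∅ by
          ext z
          simp only [Set.mem_inter_iff, Set.mem_singleton_iff, Set.mem_setOf_eq,
            Set.mem_empty_iff_false, iff_false, not_and]
          rintro rfl; exact hwt,
          measure_empty, ENNReal.toReal_zero, mul_zero]
    rw [hLeq, hEeq, toReal_pm_ge f hf0 hf1 Y,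
      Finset.prod_congr rfl fun t _ => hfac t, Finset.prod_mul_distrib,
      Finset.prod_const, Finset.card_univ, Fintype.card_fin]
    ring
  · rintro ⟨hn2, hn3⟩ w
    obtain ⟨PF, hEeq, hLeq⟩ := master f hf0 hf1 Y D r d hdD c {z : ℤ | z ≤ Y}
      (fun ω hp => osEq_iff_case2 hdD.le ω c hr1 hrD hp hn2 hn3) w
    have hne : Fcdf f Y ≠ 0 := by
      intro h
      rw [hEeq, toReal_pm_le f hf0 hf1 Y, h, zero_pow hDd, mul_zero] at hE
      exact lt_irrefl 0 hE
    have hfac : ∀ t : Fin (D - d), (parentMeasure f ({w t} ∩ {z : ℤ | z ≤ Y})).toReal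
        = Fcdf f Y * (if w t ≤ Y then f (w t) / Fcdf f Y else 0) := by
      intro t
      by_cases hwt : w t ≤ Y
      · rw [if_pos hwt, show ({w t} : Set ℤ) ∩ {z : ℤ | z ≤ Y} = {w t} by
          ext z
          simp only [Set.mem_inter_iff, Set.mem_singleton_iff, Set.mem_setOf_eq,
            and_iff_left_iff_imp]
          rintro rfl; exact hwt,
          pm_singleton, ENNReal.toReal_ofReal (hf0 _)]
        field_simp
      · rw [if_neg hwt, show ({w t} : Set ℤ) ∩ {z : ℤ | z ≤ Y} = ∅ by
          ext z
          simp only [Set.mem_inter_iff, Set.mem_singleton_iff, Set.mem_setOf_eq,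
            Set.mem_empty_iff_false, iff_false, not_and]
          rintro rfl; exact hwt,
          measure_empty, ENNReal.toReal_zero, mul_zero]
    rw [hLeq, hEeq, toReal_pm_le f hf0 hf1 Y,
      Finset.prod_congr rfl fun t _ => hfac t, Finset.prod_mul_distrib,
      Finset.prod_const, Finset.card_univ, Fintype.card_fin]
    ring
  · intro hn w
    obtain ⟨PF, hEeq, hLeq⟩ := master f hf0 hf1 Y D r d hdD c Set.univ
      (fun ω hp => iff_of_true
        (osEq_case3 hdD.le ω c hr1 hrD hp
          (by rw [hn]; exact le_max_left _ _)
          (by rw [hn]; exact le_max_right _ _))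
        (fun t => trivial)) w
    have h1 : (parentMeasure f (Set.univ : Set ℤ)).toReal = 1 := by
      rw [pm_univ f hf0 hf1]; simp
    rw [hLeq, hEeq, h1, one_pow, mul_one]
    congr 1
    apply Finset.prod_congr rfl
    intro t _
    rw [Set.inter_univ, pm_singleton, ENNReal.toReal_ofReal (hf0 _)]
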